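/- Suppose the target and observer both move with polynomial trajectories of degree at most n and the observer has a nonzero term of degree n+1, i.e. p_o(t) = c₀ + ... + c_n tⁿ + d·t^{n+1} with d ≠ 0. Then the observability condition of Theorem 1 holds: the relative trajectory and the target size ℓ are uniquely determined by the bearing and angle functions. -/

import Mathlib

lemma vec_poly_zero (m : ℕ) (v : Fin m → EuclideanSpace ℝ (Fin 3))
    (h : ∀ t : ℝ, ∑ j : Fin m, t ^ (j : ℕ) • v j = 0) : ∀ j, v j = 0 := by
  intro j
  ext i
  have hp : (∑ k : Fin m, Polynomial.C (v k i) * Polynomial.X ^ (k : ℕ)) = 0 := by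
    apply Polynomial.funext
    intro t
    have ht := congrArg (EuclideanSpace.proj (𝕜 := ℝ) i) (h t)
    simp only [map_sum, map_smul, smul_eq_mul, map_zero] at ht
    simp only [Polynomial.eval_finset_sum, Polynomial.eval_mul, Polynomial.eval_C,
      Polynomial.eval_pow, Polynomial.eval_X, Polynomial.eval_zero]
    simpa [mul_comm] using ht
  have hc := congrArg (fun p => Polynomial.coeff p (j : ℕ)) hp
  simpa [Polynomial.finset_sum_coeff, Polynomial.coeff_C_mul, Polynomial.coeff_X_pow,
    Fin.val_eq_val] using hc



/-- Corollary of Theorem 1: if the observer's trajectory has a nonzero term of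
degree `n+1` (so the relative trajectory is
`s(t) = s₀ + ⋯ + sₙ tⁿ + t^{n+1} d` with `d ≠ 0`), then the bearing function
`g(t) = s(t)/‖s(t)‖` and the angle function `θ(t) = ℓ/‖s(t)‖` uniquely
determine the relative trajectory and the target size `ℓ`. -/
theorem observable_with_degree_succ_term
    (n : ℕ) (d : EuclideanSpace ℝ (Fin 3)) (hd : d ≠ 0) :
    ∀ (s s' : Fin (n + 1) → EuclideanSpace ℝ (Fin 3)) (ℓ ℓ' : ℝ),
      0 < ℓ → 0 < ℓ' →
      (∀ t : ℝ, (∑ j : Fin (n + 1), t ^ (j : ℕ) • s j) + t ^ (n + 1) • d ≠ 0) →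
      (∀ t : ℝ, (∑ j : Fin (n + 1), t ^ (j : ℕ) • s' j) + t ^ (n + 1) • d ≠ 0) →
      (∀ t : ℝ, ‖(∑ j : Fin (n + 1), t ^ (j : ℕ) • s j) + t ^ (n + 1) • d‖⁻¹ •
            ((∑ j : Fin (n + 1), t ^ (j : ℕ) • s j) + t ^ (n + 1) • d) =
          ‖(∑ j : Fin (n + 1), t ^ (j : ℕ) • s' j) + t ^ (n + 1) • d‖⁻¹ •
            ((∑ j : Fin (n + 1), t ^ (j : ℕ) • s' j) + t ^ (n + 1) • d)) →
      (∀ t : ℝ, ℓ / ‖(∑ j : Fin (n + 1), t ^ (j : ℕ) • s j) + t ^ (n + 1) • d‖ =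
          ℓ' / ‖(∑ j : Fin (n + 1), t ^ (j : ℕ) • s' j) + t ^ (n + 1) • d‖) →
      s = s' ∧ ℓ = ℓ' := by
  intro s s' ℓ ℓ' hℓ hℓ' hne hne' hg hθ
  set S : ℝ → EuclideanSpace ℝ (Fin 3) :=
    fun t => (∑ j : Fin (n + 1), t ^ (j : ℕ) • s j) + t ^ (n + 1) • d with hS
  set S' : ℝ → EuclideanSpace ℝ (Fin 3) :=
    fun t => (∑ j : Fin (n + 1), t ^ (j : ℕ) • s' j) + t ^ (n + 1) • d with hS'
  set c : ℝ := ℓ' / ℓ with hc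
  have hcpos : 0 < c := div_pos hℓ' hℓ
  -- norm relation
  have hnorm : ∀ t, ‖S' t‖ = c * ‖S t‖ := by
    intro t
    have h1 : ‖S t‖ ≠ 0 := norm_ne_zero_iff.mpr (hne t)
    have h2 : ‖S' t‖ ≠ 0 := norm_ne_zero_iff.mpr (hne' t)
    have := hθ t
    have h3 : ℓ / ‖S t‖ = ℓ' / ‖S' t‖ := this
    rw [div_eq_div_iff h1 h2] at h3
    rw [hc, div_mul_eq_mul_div, eq_div_iff hℓ.ne']
    linarith [h3]
  -- vector relation
  have hvec : ∀ t, S' t = c • S t := by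
    intro t
    have h1 : ‖S t‖ ≠ 0 := norm_ne_zero_iff.mpr (hne t)
    have h2 : ‖S' t‖ ≠ 0 := norm_ne_zero_iff.mpr (hne' t)
    have hg' := hg t
    calc S' t = ‖S' t‖ • (‖S' t‖⁻¹ • S' t) := by
          rw [smul_smul, mul_inv_cancel₀ h2, one_smul]
      _ = ‖S' t‖ • (‖S t‖⁻¹ • S t) := by rw [← hg']
      _ = (c * ‖S t‖) • (‖S t‖⁻¹ • S t) := by rw [hnorm t]
      _ = c • S t := by
          rw [smul_smul, mul_assoc, mul_inv_cancel₀ h1, mul_one]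
  -- package as vanishing vector polynomial of degree n+1
  set w : Fin (n + 2) → EuclideanSpace ℝ (Fin 3) :=
    Fin.snoc (fun j => s' j - c • s j) ((1 - c) • d) with hw
  have hwzero : ∀ j, w j = 0 := by
    apply vec_poly_zero
    intro t
    have hv := hvec t
    rw [Fin.sum_univ_castSucc]
    simp only [hw, Fin.snoc_castSucc, Fin.snoc_last, Fin.val_last, Fin.coe_castSucc]
    have : ∑ j : Fin (n + 1), t ^ (j : ℕ) • (s' j - c • s j)
        = (∑ j : Fin (n + 1), t ^ (j : ℕ) • s' j)
          - c • ∑ j : Fin (n + 1), t ^ (j : ℕ) • s j := by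
      rw [Finset.smul_sum, ← Finset.sum_sub_distrib]
      congr 1; ext j
      rw [smul_sub, smul_comm]
    rw [this]
    have hv' : (∑ j : Fin (n + 1), t ^ (j : ℕ) • s' j) + t ^ (n + 1) • d
        = c • ((∑ j : Fin (n + 1), t ^ (j : ℕ) • s j) + t ^ (n + 1) • d) := hv
    rw [smul_add] at hv'
    linear_combination (norm := module) hv'
  have hc1 : c = 1 := by
    have := hwzero (Fin.last (n + 1))
    rw [hw, Fin.snoc_last, smul_eq_zero] at this
    rcases this with h | h
    · linarith [sub_eq_zero.mp (by linarith [h] : (1:ℝ) - c = 0)]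
    · exact absurd h hd
  constructor
  · funext j
    have := hwzero j.castSucc
    rw [hw, Fin.snoc_castSucc, hc1, one_smul, sub_eq_zero] at this
    exact this.symm ▸ rfl
  · have : ℓ' = c * ℓ := by rw [hc, div_mul_cancel₀ _ hℓ.ne']
    rw [this, hc1, one_mul]
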